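/- For integers n ≥ r ≥ 1, [p_n^{(r)}]_q = ∑_{j=r}^n p_n^{(j)} · ( ∑_{l=r}^j (−1)^{l−r} C(j,l) [l choose r]_q ), where C(j,l) is the ordinary binomial coefficient and [l choose r]_q is the q-binomial coefficient. -/

import Mathlib

open MvPolynomial PowerSeries

noncomputable section

/-- The field `ℚ(q)` of rational functions in the indeterminate `q`. -/
abbrev K : Type := RatFunc ℚ

/-- The indeterminate `q` in `ℚ(q)`. -/
def qq : K := RatFunc.X

/-- `[n]_x = 1 + x + ⋯ + x^{n-1}` (so `[0]_x = 0`). -/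
def qNat (x : K) (n : ℕ) : K := ∑ i ∈ Finset.range n, x ^ i

/-- `[n]_x! = [1]_x [2]_x ⋯ [n]_x` (so `[0]_x! = 1`). -/
def qFact (x : K) (n : ℕ) : K := ∏ i ∈ Finset.range n, qNat x (i + 1)

/-- The `q`-binomial coefficient `[n choose k]_x`, equal to
`[n]_x!/([k]_x! [n-k]_x!)` for `n ≥ k ≥ 0` and to `0` otherwise. -/
def qBinom (x : K) (n k : ℕ) : K :=
  if k ≤ n then qFact x n / (qFact x k * qFact x (n - k)) else 0

/-- `p_n^{(r)}`: the sum of the monomial symmetric polynomials `m_λ` over the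
partitions `λ` of `n` of length `r` (in `N` variables, over `ℚ(q)`).
For `r = 0` this automatically gives `δ_{n,0}`. -/
def pnr (N n r : ℕ) : MvPolynomial (Fin N) K :=
  ∑ μ ∈ Finset.univ.filter (fun μ : Nat.Partition n => μ.parts.card = r),
    msymm (Fin N) K μ

/-- `E(t) = ∑_{m ≥ 0} e_m t^m`. -/
def Eser (N : ℕ) : PowerSeries (MvPolynomial (Fin N) K) :=
  PowerSeries.mk fun m => esymm (Fin N) K m

/-- The property of being "the" `q`-derivative operator on power series over
`MvPolynomial (Fin N) ℚ(q)`: `Dq` satisfies `((q−1)·t) · Dq F = F(qt) − F(t)`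
for every `F`.  (This characterizes `Dq F = (F(qt) − F(t))/((q−1)t)` uniquely,
since `(q−1)·t` is a nonzerodivisor.) -/
def IsqDeriv (N : ℕ)
    (Dq : PowerSeries (MvPolynomial (Fin N) K) → PowerSeries (MvPolynomial (Fin N) K)) : Prop :=
  ∀ F, (PowerSeries.C (MvPolynomial.C (qq - 1)) * PowerSeries.X) * Dq F =
    PowerSeries.rescale (MvPolynomial.C qq) F - F

/-- The property that the family `P n r` is the family of `q`-analogs
`[p_n^{(r)}]_q`, i.e. it satisfies the defining generating identity
`[r]_q! · E(t) · ∑_{n≥r} [p_n^{(r)}]_q (−1)^{n−r} t^{n−r} = D_q^r E(t)` for every `r ≥ 0`,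
where `Dq` is the `q`-derivative. -/
def IsqAnalog (N : ℕ)
    (Dq : PowerSeries (MvPolynomial (Fin N) K) → PowerSeries (MvPolynomial (Fin N) K))
    (P : ℕ → ℕ → MvPolynomial (Fin N) K) : Prop :=
  ∀ r : ℕ,
    PowerSeries.C (MvPolynomial.C (qFact qq r)) * Eser N *
        (PowerSeries.mk fun m => (-1 : MvPolynomial (Fin N) K) ^ m * P (m + r) r) =
      Dq^[r] (Eser N)

end


noncomputable section Aux

open Finset

lemma qNat_eq_algebraMap (k : ℕ) :
    qNat qq k = algebraMap (Polynomial ℚ) K (∑ i ∈ range k, Polynomial.X ^ i) := by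
  rw [qNat, map_sum]
  simp [qq, RatFunc.algebraMap_X]

lemma qNat_ne_zero {k : ℕ} (hk : 1 ≤ k) : qNat qq k ≠ 0 := by
  rw [qNat_eq_algebraMap]
  apply RatFunc.algebraMap_ne_zero
  intro h
  have h0 : (∑ i ∈ range k, (Polynomial.X : Polynomial ℚ) ^ i).coeff 0 = 1 := by
    rw [Polynomial.finset_sum_coeff]
    rw [Finset.sum_eq_single 0]
    · simp
    · intro b _ hb; simp [Polynomial.coeff_X_pow, Ne.symm hb]
    · intro h'; exact absurd (Finset.mem_range.2 hk) h'
  rw [h] at h0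
  simp at h0

lemma qFact_ne_zero (k : ℕ) : qFact qq k ≠ 0 := by
  rw [qFact]
  exact Finset.prod_ne_zero_iff.2 fun i _ => qNat_ne_zero (Nat.le_add_left 1 i)

lemma qq_sub_one_ne_zero : qq - 1 ≠ 0 := by
  have : qq - 1 = algebraMap (Polynomial ℚ) K (Polynomial.X - Polynomial.C 1) := by
    simp [qq, RatFunc.algebraMap_X, map_sub]
  rw [this]
  exact RatFunc.algebraMap_ne_zero (Polynomial.X_sub_C_ne_zero 1)

/-- `[m+1][m+2]⋯[m+r]`. -/
def qPoch (m r : ℕ) : K := ∏ i ∈ range r, qNat qq (m + 1 + i)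

lemma qFact_add (m r : ℕ) : qFact qq (m + r) = qFact qq m * qPoch m r := by
  rw [qFact, Finset.prod_range_add, qPoch, qFact]
  congr 1
  exact Finset.prod_congr rfl fun i _ => by ring_nf

lemma qFact_mul_qBinom (m r : ℕ) : qFact qq r * qBinom qq (m + r) r = qPoch m r := by
  rw [qBinom, if_pos (Nat.le_add_left r m), Nat.add_sub_cancel, qFact_add m r]
  field_simp [qFact_ne_zero]

lemma alt_sum_choose (n : ℕ) :
    ∑ k ∈ range (n + 1), (-1 : K) ^ k * (n.choose k : K) = if n = 0 then 1 else 0 := by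
  have := congrArg (fun z : ℤ => (z : K)) (Int.alternating_sum_range_choose (n := n))
  push_cast at this
  rw [this]

lemma neg_one_pow_self_mul (a : ℕ) : ((-1 : K)) ^ a * (-1) ^ a = 1 := by
  rw [← pow_add, ← two_mul, pow_mul]; simp

lemma neg_one_pow_sub {a m : ℕ} (h : a ≤ m) :
    ((-1 : K)) ^ (m - a) = (-1) ^ m * (-1) ^ a := by
  calc ((-1 : K)) ^ (m - a) = (-1) ^ (m - a) * ((-1) ^ a * (-1) ^ a) := by
        rw [neg_one_pow_self_mul, mul_one]
    _ = (-1) ^ ((m - a) + a) * (-1) ^ a := by rw [pow_add]; ring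
    _ = (-1) ^ m * (-1) ^ a := by rw [Nat.sub_add_cancel h]

lemma sum_delta_choose {J l : ℕ} (hl : l ≤ J) :
    ∑ j ∈ range (J + 1), (-1 : K) ^ j * (J.choose j : K) * (j.choose l : K)
      = if l = J then (-1 : K) ^ J else 0 := by
  rw [range_eq_Ico, ← Finset.sum_Ico_consecutive _ (Nat.zero_le l) (by omega : l ≤ J + 1)]
  have h1 : ∑ j ∈ Finset.Ico 0 l, (-1 : K) ^ j * (J.choose j : K) * (j.choose l : K) = 0 := by
    apply Finset.sum_eq_zero
    intro j hj
    rw [Finset.mem_Ico] at hj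
    rw [Nat.choose_eq_zero_of_lt hj.2]
    simp
  rw [h1, zero_add, Finset.sum_Ico_eq_sum_range]
  have h2 : ∀ k ∈ range (J + 1 - l), (-1 : K) ^ (l + k) * (J.choose (l + k) : K) *
      ((l + k).choose l : K) = ((-1 : K) ^ l * (J.choose l : K)) *
        ((-1 : K) ^ k * ((J - l).choose k : K)) := by
    intro k hk
    rw [Finset.mem_range] at hk
    have hkJ : l + k ≤ J := by omega
    have := Nat.choose_mul (n := J) (Nat.le_add_right l k)
    have hc : (J.choose (l + k) : K) * ((l + k).choose l : K)
        = (J.choose l : K) * ((J - l).choose (l + k - l) : K) := by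
      rw [← Nat.cast_mul, ← Nat.cast_mul, this]
    have hlk : l + k - l = k := by omega
    rw [hlk] at hc
    rw [pow_add]
    calc (-1 : K) ^ l * (-1 : K) ^ k * (J.choose (l + k) : K) * ((l + k).choose l : K)
        = (-1 : K) ^ l * (-1 : K) ^ k * ((J.choose (l + k) : K) * ((l + k).choose l : K)) := by ring
      _ = (-1 : K) ^ l * (-1 : K) ^ k * ((J.choose l : K) * ((J - l).choose k : K)) := by rw [hc]
      _ = (-1 : K) ^ l * (J.choose l : K) * ((-1 : K) ^ k * ((J - l).choose k : K)) := by ring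
  rw [Finset.sum_congr rfl h2, ← Finset.mul_sum]
  have hJl : J + 1 - l = (J - l) + 1 := by omega
  rw [hJl, alt_sum_choose]
  by_cases h : l = J
  · subst h; simp
  · have : J - l ≠ 0 := by omega
    rw [if_neg this, if_neg h, mul_zero]

/-- Binomial inversion over `K`. -/
lemma binom_inv (a : ℕ → K) (J : ℕ) :
    ∑ j ∈ range (J + 1), (-1 : K) ^ j * (J.choose j : K) *
      (∑ l ∈ range (j + 1), (-1 : K) ^ l * (j.choose l : K) * a l) = a J := by
  have expand : ∀ j ∈ range (J + 1),
      (-1 : K) ^ j * (J.choose j : K) *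
        (∑ l ∈ range (j + 1), (-1 : K) ^ l * (j.choose l : K) * a l)
      = ∑ l ∈ range (J + 1),
          (-1 : K) ^ j * (J.choose j : K) * ((-1 : K) ^ l * (j.choose l : K) * a l) := by
    intro j hj
    rw [Finset.mem_range] at hj
    rw [Finset.mul_sum]
    apply Finset.sum_subset
    · intro l hl; rw [Finset.mem_range] at hl ⊢; omega
    · intro l _ hl
      rw [Finset.mem_range, not_lt] at hl
      rw [Nat.choose_eq_zero_of_lt hl]
      simp
  rw [Finset.sum_congr rfl expand, Finset.sum_comm]
  have inner : ∀ l ∈ range (J + 1),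
      (∑ j ∈ range (J + 1),
        (-1 : K) ^ j * (J.choose j : K) * ((-1 : K) ^ l * (j.choose l : K) * a l))
      = ((-1 : K) ^ l * a l) * (if l = J then (-1 : K) ^ J else 0) := by
    intro l hl
    rw [Finset.mem_range] at hl
    rw [← sum_delta_choose (by omega : l ≤ J), Finset.mul_sum]
    exact Finset.sum_congr rfl fun j _ => by ring
  rw [Finset.sum_congr rfl inner]
  rw [Finset.sum_eq_single J]
  · rw [if_pos rfl]
    calc (-1 : K) ^ J * a J * (-1) ^ J = ((-1) ^ J * (-1) ^ J) * a J := by ring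
      _ = a J := by rw [neg_one_pow_self_mul, one_mul]
  · intro b _ hb; rw [if_neg hb, mul_zero]
  · intro h; exact absurd (Finset.self_mem_range_succ J) h

/-- The coefficient `c_{j,r}` from the statement. -/
def cval (r j : ℕ) : K :=
  ∑ l ∈ Finset.Icc r j, (-1 : K) ^ (l - r) * (j.choose l : K) * qBinom qq l r

lemma cval_eq_zero {r j : ℕ} (h : j < r) : cval r j = 0 := by
  rw [cval, Finset.Icc_eq_empty (by omega), Finset.sum_empty]

lemma cval_eq_range (r j : ℕ) :
    cval r j = ∑ l ∈ range (j + 1),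
      (-1 : K) ^ l * (j.choose l : K) * ((-1 : K) ^ r * qBinom qq l r) := by
  have hsub : Finset.Icc r j ⊆ range (j + 1) := by
    intro l hl; rw [Finset.mem_Icc] at hl; rw [Finset.mem_range]; omega
  have hzero : ∀ l ∈ range (j + 1), l ∉ Finset.Icc r j →
      (-1 : K) ^ l * (j.choose l : K) * ((-1 : K) ^ r * qBinom qq l r) = 0 := by
    intro l hl hl'
    rw [Finset.mem_range] at hl
    rw [Finset.mem_Icc, not_and_or] at hl'
    have : ¬ r ≤ l := by rcases hl' with h | h; exact h; omega
    rw [qBinom, if_neg this]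
    ring
  rw [← Finset.sum_subset hsub hzero, cval]
  apply Finset.sum_congr rfl
  intro l hl
  rw [Finset.mem_Icc] at hl
  rw [neg_one_pow_sub hl.1]
  ring

lemma key_scalar (r J : ℕ) :
    ∑ k ∈ range (J + 1), (J.choose k : K) * ((-1 : K) ^ k * cval r (J - k))
      = (-1 : K) ^ J * ((-1 : K) ^ r * qBinom qq J r) := by
  rw [← Finset.sum_flip (fun k => (J.choose k : K) * ((-1 : K) ^ k * cval r (J - k)))]
  have congr1 : ∀ j ∈ range (J + 1),
      (J.choose (J - j) : K) * ((-1 : K) ^ (J - j) * cval r (J - (J - j)))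
      = (-1 : K) ^ J * ((-1 : K) ^ j * (J.choose j : K) * cval r j) := by
    intro j hj
    rw [Finset.mem_range] at hj
    have hjJ : j ≤ J := by omega
    rw [Nat.choose_symm hjJ, neg_one_pow_sub hjJ, Nat.sub_sub_self hjJ]
    ring
  rw [Finset.sum_congr rfl congr1, ← Finset.mul_sum]
  congr 1
  have : ∀ j ∈ range (J + 1), (-1 : K) ^ j * (J.choose j : K) * cval r j
      = (-1 : K) ^ j * (J.choose j : K) * (∑ l ∈ range (j + 1),
          (-1 : K) ^ l * (j.choose l : K) * ((-1 : K) ^ r * qBinom qq l r)) := by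
    intro j _
    rw [cval_eq_range]
  rw [Finset.sum_congr rfl this, binom_inv (fun l => (-1 : K) ^ r * qBinom qq l r) J]

end Aux

noncomputable section Coeffs

open Finset

variable {N : ℕ}

/-- The 0-1 indicator finsupp of a finset. -/
def indic (S : Finset (Fin N)) : Fin N →₀ ℕ := ∑ i ∈ S, Finsupp.single i 1

lemma indic_apply (S : Finset (Fin N)) (i : Fin N) :
    indic S i = if i ∈ S then 1 else 0 := by
  rw [indic, Finsupp.finset_sum_apply]
  simp [Finsupp.single_apply]

lemma indic_support (S : Finset (Fin N)) : (indic S).support = S := by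
  ext i
  rw [Finsupp.mem_support_iff, indic_apply]
  split <;> simp_all

lemma indic_le_iff (S : Finset (Fin N)) (d : Fin N →₀ ℕ) :
    indic S ≤ d ↔ S ⊆ d.support := by
  constructor
  · intro h i hi
    have := h i
    rw [indic_apply, if_pos hi] at this
    rw [Finsupp.mem_support_iff]
    omega
  · intro h i
    rw [indic_apply]
    split
    · next hi =>
        have := h hi
        rw [Finsupp.mem_support_iff] at this
        omega
    · exact Nat.zero_le _

/-- total degree of an exponent vector, as sum over all variables -/
def degf {N : ℕ} (d : Fin N →₀ ℕ) : ℕ := ∑ i, d i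

lemma degf_eq_sum_support (d : Fin N →₀ ℕ) : degf d = ∑ i ∈ d.support, d i := by
  rw [degf]
  exact (Finset.sum_subset (Finset.subset_univ _)
    (fun i _ hi => Finsupp.notMem_support_iff.1 hi)).symm

lemma degf_indic (S : Finset (Fin N)) : degf (indic S) = S.card := by
  rw [degf]
  simp [indic_apply]

lemma support_card_le_degf (d : Fin N →₀ ℕ) : d.support.card ≤ degf d := by
  rw [degf_eq_sum_support, Finset.card_eq_sum_ones]
  apply Finset.sum_le_sum
  intro i hi
  rw [Finsupp.mem_support_iff] at hi
  omega

lemma degf_sub_add {S : Finset (Fin N)} {d : Fin N →₀ ℕ} (h : indic S ≤ d) :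
    degf (d - indic S) + S.card = degf d := by
  rw [← degf_indic S, degf, degf, degf, ← Finset.sum_add_distrib]
  apply Finset.sum_congr rfl
  intro i _
  rw [Finsupp.tsub_apply]
  have := h i
  omega

lemma support_sub_indic {S : Finset (Fin N)} {d : Fin N →₀ ℕ} (h : S ⊆ d.support) :
    (d - indic S).support = d.support \ (S.filter fun i => d i = 1) := by
  ext i
  rw [Finsupp.mem_support_iff, Finsupp.tsub_apply, indic_apply, Finset.mem_sdiff,
    Finsupp.mem_support_iff, Finset.mem_filter]
  by_cases hi : i ∈ S
  · have hd : d i ≠ 0 := Finsupp.mem_support_iff.1 (h hi)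
    simp only [hi, if_true, true_and]
    omega
  · simp only [hi, if_false, false_and, not_false_eq_true, and_true, tsub_zero]

lemma coeff_esymm_eq (d : Fin N →₀ ℕ) (k : ℕ) :
    coeff d (esymm (Fin N) K k) =
      if degf d = k ∧ d.support.card = k then 1 else 0 := by
  rw [esymm_eq_sum_monomial, MvPolynomial.coeff_sum]
  simp_rw [MvPolynomial.coeff_monomial]
  by_cases h : degf d = k ∧ d.support.card = k
  · rw [if_pos h]
    have hall : ∀ i ∈ d.support, d i = 1 := by
      have hle : ∀ i ∈ d.support, (1:ℕ) ≤ d i := fun i hi =>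
        Nat.one_le_iff_ne_zero.2 (Finsupp.mem_support_iff.1 hi)
      have h1 : ∑ i ∈ d.support, (1 : ℕ) = ∑ i ∈ d.support, d i := by
        rw [← degf_eq_sum_support, h.1, ← h.2, Finset.card_eq_sum_ones]
      intro i hi
      exact ((Finset.sum_eq_sum_iff_of_le hle).1 h1 i hi).symm
    have hd : indic d.support = d := by
      ext i
      rw [indic_apply]
      by_cases hi : i ∈ d.support
      · rw [if_pos hi, hall i hi]
      · rw [if_neg hi, (Finsupp.notMem_support_iff.1 hi)]
    rw [Finset.sum_eq_single d.support]
    · rw [show (∑ i ∈ d.support, Finsupp.single i 1) = indic d.support from rfl, hd, if_pos rfl]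
    · intro S hS hSne
      rw [if_neg]
      intro heq
      apply hSne
      have : (indic S) = d := heq
      rw [← this, indic_support]
    · intro hmem
      exact absurd (Finset.mem_powersetCard.2 ⟨Finset.subset_univ _, h.2⟩) hmem
  · rw [if_neg h]
    apply Finset.sum_eq_zero
    intro S hS
    rw [Finset.mem_powersetCard] at hS
    rw [if_neg]
    intro heq
    apply h
    have hind : indic S = d := heq
    constructor
    · rw [← hind, degf_indic, hS.2]
    · rw [← hind, indic_support, hS.2]

lemma multiset_prod_X (s : Multiset (Fin N)) :
    (s.map (MvPolynomial.X : Fin N → MvPolynomial (Fin N) K)).prod = MvPolynomial.monomial s.toFinsupp 1 := by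
  induction s using Multiset.induction_on with
  | empty => simp [MvPolynomial.monomial_zero']
  | cons a s ih =>
      rw [Multiset.map_cons, Multiset.prod_cons, ih,
        show (a ::ₘ s) = {a} + s from (Multiset.singleton_add a s).symm,
        Multiset.toFinsupp_add, Multiset.toFinsupp_singleton,
        MvPolynomial.X, MvPolynomial.monomial_mul, one_mul]

lemma dedup_toMultiset (d : Fin N →₀ ℕ) :
    (Finsupp.toMultiset d).dedup = d.support.val := by
  have := Finsupp.toFinset_toMultiset d
  exact congrArg Finset.val this

lemma parts_of_toMultiset (d : Fin N →₀ ℕ) :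
    (Finsupp.toMultiset d).dedup.map ((Finsupp.toMultiset d).count) = d.support.val.map d := by
  rw [dedup_toMultiset]
  apply Multiset.map_congr rfl
  intro i _
  exact Finsupp.count_toMultiset d i

lemma sum_map_support (d : Fin N →₀ ℕ) : (d.support.val.map d).sum = ∑ i ∈ d.support, d i := rfl

lemma coeff_msymm_eq {n' : ℕ} (μ : Nat.Partition n') (d : Fin N →₀ ℕ) :
    coeff d (msymm (Fin N) K μ) =
      if d.support.val.map d = μ.parts then 1 else 0 := by
  rw [msymm, coeff_sum]
  simp_rw [multiset_prod_X, MvPolynomial.coeff_monomial]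
  by_cases hcond : d.support.val.map d = μ.parts
  · have hcard : Multiset.card (Finsupp.toMultiset d) = n' := by
      rw [Finsupp.card_toMultiset]
      have : (d.sum fun _ => id) = ∑ i ∈ d.support, d i := rfl
      rw [this, ← sum_map_support, hcond, μ.parts_sum]
    have hofSym : Nat.Partition.ofSym (⟨Finsupp.toMultiset d, hcard⟩ : Sym (Fin N) n') = μ := by
      apply Nat.Partition.ext
      show (Finsupp.toMultiset d).dedup.map ((Finsupp.toMultiset d).count) = μ.parts
      rw [parts_of_toMultiset, hcond]
    rw [Finset.sum_eq_single
      (⟨⟨Finsupp.toMultiset d, hcard⟩, hofSym⟩ : {a : Sym (Fin N) n' // Nat.Partition.ofSym a = μ})]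
    · rw [if_pos hcond, if_pos]
      exact Finsupp.toMultiset_toFinsupp d
    · intro b _ hb
      rw [if_neg]
      intro heq
      apply hb
      apply Subtype.ext
      apply Subtype.ext
      show b.1.1 = Finsupp.toMultiset d
      exact Multiset.toFinsupp_eq_iff.1 heq
    · intro habs; exact absurd (Finset.mem_univ _) habs
  · rw [if_neg hcond]
    apply Finset.sum_eq_zero
    intro s _
    rw [if_neg]
    intro heq
    apply hcond
    have hs : s.1.1 = Finsupp.toMultiset d := Multiset.toFinsupp_eq_iff.1 heq
    have hμ : Nat.Partition.ofSym s.1 = μ := s.2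
    rw [← hμ]
    show d.support.val.map d = s.1.1.dedup.map s.1.1.count
    rw [hs, parts_of_toMultiset]

end Coeffs

noncomputable section Coeffs2
open Finset
variable {N : ℕ}

def Qpoly (N r n' : ℕ) : MvPolynomial (Fin N) K :=
  ∑ j ∈ Finset.Icc r n', pnr N n' j * MvPolynomial.C (cval r j)

lemma coeff_pnr (n' j : ℕ) (d : Fin N →₀ ℕ) :
    coeff d (pnr N n' j) = if degf d = n' ∧ d.support.card = j then 1 else 0 := by
  rw [pnr, coeff_sum]
  simp_rw [coeff_msymm_eq]
  by_cases h : degf d = n' ∧ d.support.card = j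
  · have hpos : ∀ {x : ℕ}, x ∈ d.support.val.map d → 0 < x := by
      intro x hx
      obtain ⟨i, hi, rfl⟩ := Multiset.mem_map.1 hx
      have : d i ≠ 0 := Finsupp.mem_support_iff.1 hi
      omega
    have hsum : (d.support.val.map d).sum = n' := by
      rw [sum_map_support, ← degf_eq_sum_support, h.1]
    rw [if_pos h, Finset.sum_eq_single (⟨d.support.val.map d, hpos, hsum⟩ : Nat.Partition n')]
    · rw [if_pos rfl]
    · intro μ hμ hne
      rw [if_neg]
      intro heq
      exact hne (Nat.Partition.ext heq.symm)
    · intro habs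
      exfalso
      apply habs
      rw [Finset.mem_filter]
      refine ⟨Finset.mem_univ _, ?_⟩
      show (d.support.val.map d).card = j
      rw [Multiset.card_map]
      exact h.2
  · rw [if_neg h]
    apply Finset.sum_eq_zero
    intro μ hμ
    rw [if_neg]
    intro heq
    apply h
    constructor
    · rw [degf_eq_sum_support, ← sum_map_support, heq, μ.parts_sum]
    · have hcard := (Finset.mem_filter.1 hμ).2
      rw [← hcard, ← heq, Multiset.card_map]
      rfl


lemma coeff_Qpoly (r n' : ℕ) (d : Fin N →₀ ℕ) :
    coeff d (Qpoly N r n') = if degf d = n' then cval r d.support.card else 0 := by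
  rw [Qpoly, coeff_sum]
  have hcomm : ∀ j, pnr N n' j * MvPolynomial.C (cval r j)
      = MvPolynomial.C (cval r j) * pnr N n' j := fun j => mul_comm _ _
  simp_rw [hcomm, MvPolynomial.coeff_C_mul, coeff_pnr]
  by_cases hdeg : degf d = n'
  · rw [if_pos hdeg]
    have hstep : ∀ j ∈ Finset.Icc r n',
        cval r j * (if degf d = n' ∧ d.support.card = j then (1:K) else 0)
          = if d.support.card = j then cval r j else 0 := by
      intro j _
      by_cases hj : d.support.card = j
      · rw [if_pos ⟨hdeg, hj⟩, if_pos hj, mul_one]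
      · rw [if_neg (fun hc => hj hc.2), if_neg hj, mul_zero]
    rw [Finset.sum_congr rfl hstep, Finset.sum_ite_eq (Finset.Icc r n') d.support.card (cval r)]
    by_cases hmem : d.support.card ∈ Finset.Icc r n'
    · rw [if_pos hmem]
    · rw [if_neg hmem]
      have hle : d.support.card ≤ n' := hdeg ▸ support_card_le_degf d
      have hlt : d.support.card < r := by
        rw [Finset.mem_Icc] at hmem
        omega
      rw [cval_eq_zero hlt]
  · rw [if_neg hdeg]
    apply Finset.sum_eq_zero
    intro j _
    rw [if_neg (fun hc => hdeg hc.1), mul_zero]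



end Coeffs2


noncomputable section Star

open Finset

lemma star (N r : ℕ) (hr : 1 ≤ r) (m : ℕ) :
    ∑ p ∈ Finset.HasAntidiagonal.antidiagonal m,
        esymm (Fin N) K p.1 * ((-1 : MvPolynomial (Fin N) K) ^ p.2 * Qpoly N r (p.2 + r))
      = MvPolynomial.C (qBinom qq (m + r) r) * esymm (Fin N) K (m + r) := by
  apply MvPolynomial.ext
  intro d
  have hsummand : ∀ p : ℕ × ℕ,
      esymm (Fin N) K p.1 * ((-1 : MvPolynomial (Fin N) K) ^ p.2 * Qpoly N r (p.2 + r))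
        = MvPolynomial.C ((-1 : K) ^ p.2) * (esymm (Fin N) K p.1 * Qpoly N r (p.2 + r)) := by
    intro p
    have h1 : ((-1 : MvPolynomial (Fin N) K)) ^ p.2 = MvPolynomial.C ((-1 : K) ^ p.2) := by
      rw [map_pow, map_neg, map_one]
    rw [h1]; ring
  rw [MvPolynomial.coeff_sum]
  simp_rw [hsummand, MvPolynomial.coeff_C_mul]
  have hprod : ∀ a n' : ℕ, MvPolynomial.coeff d (esymm (Fin N) K a * Qpoly N r n')
      = ∑ S ∈ Finset.powersetCard a Finset.univ,
          (if indic S ≤ d then MvPolynomial.coeff (d - indic S) (Qpoly N r n') else 0) := by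
    intro a n'
    rw [esymm_eq_sum_monomial, Finset.sum_mul, MvPolynomial.coeff_sum]
    apply Finset.sum_congr rfl
    intro S _
    rw [show (∑ i ∈ S, Finsupp.single i (1:ℕ)) = indic S from rfl,
      MvPolynomial.coeff_monomial_mul']
    split
    · rw [one_mul]
    · rfl
  simp_rw [hprod, coeff_Qpoly]
  rw [coeff_esymm_eq]
  by_cases hdeg : degf d = m + r
  case neg =>
    rw [if_neg (fun hc => hdeg hc.1), mul_zero]
    apply Finset.sum_eq_zero
    intro p hp
    rw [Finset.HasAntidiagonal.mem_antidiagonal] at hp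
    have hz : ∑ S ∈ Finset.powersetCard p.1 Finset.univ,
        (if indic S ≤ d then (if degf (d - indic S) = p.2 + r
          then cval r (d - indic S).support.card else 0) else 0) = 0 := by
      apply Finset.sum_eq_zero
      intro S hS
      rw [Finset.mem_powersetCard] at hS
      by_cases hle : indic S ≤ d
      · have hsa := degf_sub_add hle
        rw [hS.2] at hsa
        rw [if_pos hle, if_neg (by omega)]
      · rw [if_neg hle]
    rw [hz, mul_zero]
  case pos =>
    set G : ℕ → K := fun a => ∑ S ∈ Finset.powersetCard a d.support,
        cval r ((d - indic S).support.card) with hG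
    have hstepA : ∀ p ∈ Finset.HasAntidiagonal.antidiagonal m,
        (∑ S ∈ Finset.powersetCard p.1 Finset.univ,
          (if indic S ≤ d then (if degf (d - indic S) = p.2 + r
            then cval r (d - indic S).support.card else 0) else 0))
        = G p.1 := by
      intro p hp
      rw [Finset.HasAntidiagonal.mem_antidiagonal] at hp
      rw [hG]
      rw [← Finset.sum_subset (Finset.powersetCard_mono (Finset.subset_univ d.support))]
      · apply Finset.sum_congr rfl
        intro S hS
        rw [Finset.mem_powersetCard] at hS
        have hle : indic S ≤ d := (indic_le_iff S d).2 hS.1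
        have hdsub := degf_sub_add hle
        rw [hS.2] at hdsub
        rw [if_pos hle, if_pos (by omega)]
      · intro S hS hS'
        rw [Finset.mem_powersetCard] at hS hS'
        have hnsub : ¬ S ⊆ d.support := fun hsub => hS' ⟨hsub, hS.2⟩
        rw [if_neg (fun hle => hnsub ((indic_le_iff S d).1 hle))]
    rw [Finset.sum_congr rfl (fun p hp => by rw [hstepA p hp])]
    have hGzero : ∀ a, m < a → G a = 0 := by
      intro a ha
      apply Finset.sum_eq_zero
      intro S hS
      rw [Finset.mem_powersetCard] at hS
      have hle : indic S ≤ d := (indic_le_iff S d).2 hS.1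
      have h1 := degf_sub_add hle
      rw [hS.2] at h1
      have h2 := support_card_le_degf (d - indic S)
      exact cval_eq_zero (by omega)
    have hGempty : ∀ a, d.support.card < a → G a = 0 := by
      intro a ha
      show (∑ S ∈ Finset.powersetCard a d.support, cval r ((d - indic S).support.card)) = 0
      rw [Finset.powersetCard_eq_empty.2 ha, Finset.sum_empty]
    rw [Finset.Nat.sum_antidiagonal_eq_sum_range_succ_mk]
    have hsign : ∀ k ∈ Finset.range (m+1), ((-1:K))^((k, m-k).2) * G ((k, m-k).1)
        = (-1:K)^m * ((-1)^k * G k) := by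
      intro k hk
      rw [Finset.mem_range] at hk
      show ((-1:K))^(m-k) * G k = _
      rw [neg_one_pow_sub (by omega : k ≤ m)]
      ring
    rw [Finset.sum_congr rfl hsign, ← Finset.mul_sum]
    have hext : ∑ k ∈ Finset.range (m+1), (-1:K)^k * G k
        = ∑ S ∈ d.support.powerset, (-1:K)^S.card * cval r ((d - indic S).support.card) := by
      have e1 : ∑ k ∈ Finset.range (m+1), (-1:K)^k * G k
          = ∑ k ∈ Finset.range (m + d.support.card + 1), (-1:K)^k * G k := by
        apply Finset.sum_subset
        · intro x hx
          rw [Finset.mem_range] at hx ⊢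
          omega
        · intro k _ hk
          rw [Finset.mem_range, not_lt] at hk
          rw [hGzero k (by omega), mul_zero]
      have e2 : ∑ k ∈ Finset.range (d.support.card + 1), (-1:K)^k * G k
          = ∑ k ∈ Finset.range (m + d.support.card + 1), (-1:K)^k * G k := by
        apply Finset.sum_subset
        · intro x hx
          rw [Finset.mem_range] at hx ⊢
          omega
        · intro k _ hk
          rw [Finset.mem_range, not_lt] at hk
          rw [hGempty k (by omega), mul_zero]
      rw [e1, ← e2]
      rw [Finset.powerset_card_disjiUnion]; refine Eq.trans ?_ (Finset.sum_disjiUnion _ _ _).symm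
      apply Finset.sum_congr rfl
      intro k _
      rw [hG, Finset.mul_sum]
      apply Finset.sum_congr rfl
      intro S hS
      rw [Finset.mem_powersetCard] at hS
      rw [hS.2]
    rw [hext]
    by_cases hone : ∀ i, d i ≤ 1
    · have hall1 : ∀ i ∈ d.support, d i = 1 := by
        intro i hi
        have h1 := Finsupp.mem_support_iff.1 hi
        have h2 := hone i
        omega
      have hTcard : d.support.card = m + r := by
        rw [Finset.card_eq_sum_ones]
        rw [degf_eq_sum_support] at hdeg
        rw [← hdeg]
        exact Finset.sum_congr rfl fun i hi => (hall1 i hi).symm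
      have hFS : ∀ S ∈ d.support.powerset,
          ((-1:K))^S.card * cval r ((d - indic S).support.card)
            = (-1:K)^S.card * cval r (d.support.card - S.card) := by
        intro S hS
        rw [Finset.mem_powerset] at hS
        rw [support_sub_indic hS,
          Finset.filter_true_of_mem (fun i hi => hall1 i (hS hi)),
          Finset.card_sdiff_of_subset hS]
      rw [Finset.sum_congr rfl hFS,
        Finset.sum_powerset_apply_card (fun k => (-1:K)^k * cval r (d.support.card - k))]
      have hsmul : ∀ k ∈ Finset.range (d.support.card + 1),
          (d.support.card.choose k) • ((-1:K)^k * cval r (d.support.card - k))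
          = (d.support.card.choose k : K) * ((-1:K)^k * cval r (d.support.card - k)) := by
        intro k _
        rw [nsmul_eq_mul]
      rw [Finset.sum_congr rfl hsmul]
      rw [hTcard, key_scalar r (m+r)]
      rw [if_pos ⟨hdeg, rfl⟩, mul_one]
      rw [pow_add]
      calc (-1:K)^m * ((-1)^m * (-1)^r * ((-1)^r * qBinom qq (m+r) r))
          = ((-1:K)^m*(-1)^m) * (((-1:K)^r*(-1)^r) * qBinom qq (m+r) r) := by ring
        _ = qBinom qq (m+r) r := by
            rw [neg_one_pow_self_mul, neg_one_pow_self_mul, one_mul, one_mul]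
    · push_neg at hone
      obtain ⟨i₀, hi₀⟩ := hone
      have hi₀T : i₀ ∈ d.support := Finsupp.mem_support_iff.2 (by omega)
      have hd1 : ¬ d i₀ = 1 := by omega
      have hcard_lt : d.support.card < m + r := by
        rw [← hdeg, degf_eq_sum_support, Finset.card_eq_sum_ones]
        exact Finset.sum_lt_sum
          (fun i hi => by have := Finsupp.mem_support_iff.1 hi; omega)
          ⟨i₀, hi₀T, by omega⟩
      rw [if_neg (fun hc => absurd hc.2 (by omega)), mul_zero]
      have hinv : ∑ S ∈ d.support.powerset,
          ((-1:K))^S.card * cval r ((d - indic S).support.card) = 0 := by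
        refine Finset.sum_involution
          (fun S _ => if i₀ ∈ S then S.erase i₀ else insert i₀ S) ?_ ?_ ?_ ?_
        · intro S hS
          rw [Finset.mem_powerset] at hS
          have hsub : (if i₀ ∈ S then S.erase i₀ else insert i₀ S) ⊆ d.support := by
            by_cases hi : i₀ ∈ S
            · rw [if_pos hi]; exact (Finset.erase_subset _ _).trans hS
            · rw [if_neg hi]; exact Finset.insert_subset hi₀T hS
          have hfilter : ((if i₀ ∈ S then S.erase i₀ else insert i₀ S)).filter
              (fun i => d i = 1) = S.filter (fun i => d i = 1) := by
            by_cases hi : i₀ ∈ S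
            · rw [if_pos hi, Finset.filter_erase, Finset.erase_eq_of_notMem]
              intro hmem
              exact hd1 (Finset.mem_filter.1 hmem).2
            · rw [if_neg hi, Finset.filter_insert, if_neg hd1]
          have hsuppeq : (d - indic (if i₀ ∈ S then S.erase i₀ else insert i₀ S)).support
              = (d - indic S).support := by
            rw [support_sub_indic hsub, support_sub_indic hS, hfilter]
          rw [hsuppeq]
          by_cases hi : i₀ ∈ S
          · rw [if_pos hi, Finset.card_erase_of_mem hi]
            have hge : 1 ≤ S.card := Finset.card_pos.2 ⟨i₀, hi⟩
            have hpow : ((-1:K))^S.card = -((-1:K))^(S.card - 1) := by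
              conv_lhs => rw [show S.card = (S.card - 1) + 1 by omega]
              rw [pow_succ]
              ring
            rw [hpow]
            ring
          · rw [if_neg hi, Finset.card_insert_of_notMem hi, pow_succ]
            ring
        · intro S hS hfne
          by_cases hi : i₀ ∈ S
          · rw [if_pos hi]
            exact Finset.erase_ne_self.2 hi
          · rw [if_neg hi]
            exact Finset.insert_ne_self.2 hi
        · intro S hS
          rw [Finset.mem_powerset] at hS ⊢
          by_cases hi : i₀ ∈ S
          · rw [if_pos hi]; exact (Finset.erase_subset _ _).trans hS
          · rw [if_neg hi]; exact Finset.insert_subset hi₀T hS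
        · intro S hS
          by_cases hi : i₀ ∈ S
          · rw [if_pos hi, if_neg (Finset.notMem_erase i₀ S), Finset.insert_erase hi]
          · rw [if_neg hi, if_pos (Finset.mem_insert_self i₀ S), Finset.erase_insert hi]
      rw [hinv, mul_zero]

end Star


noncomputable section PSGlue

open Finset

variable {N : ℕ}

lemma coeff_Dq (Dq : PowerSeries (MvPolynomial (Fin N) K) → PowerSeries (MvPolynomial (Fin N) K))
    (hDq : IsqDeriv N Dq) (F : PowerSeries (MvPolynomial (Fin N) K)) (n : ℕ) :
    PowerSeries.coeff n (Dq F) =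
      MvPolynomial.C (qNat qq (n+1)) * PowerSeries.coeff (n+1) F := by
  have h := congrArg (PowerSeries.coeff (n+1)) (hDq F)
  have hsub : (PowerSeries.coeff (R := MvPolynomial (Fin N) K) (n+1))
      ((PowerSeries.rescale (MvPolynomial.C qq)) F - F)
      = (MvPolynomial.C qq : MvPolynomial (Fin N) K)^(n+1)
          * PowerSeries.coeff (n+1) F - PowerSeries.coeff (n+1) F := by
    rw [map_sub, PowerSeries.coeff_rescale]
  rw [hsub, mul_assoc, PowerSeries.coeff_C_mul, PowerSeries.coeff_succ_X_mul] at h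
  apply mul_left_cancel₀
    (show (MvPolynomial.C (qq - 1) : MvPolynomial (Fin N) K) ≠ 0 by
      rw [Ne, MvPolynomial.C_eq_zero]; exact qq_sub_one_ne_zero)
  rw [h]
  have key : (MvPolynomial.C qq : MvPolynomial (Fin N) K)^(n+1) - 1
      = MvPolynomial.C (qq - 1) * MvPolynomial.C (qNat qq (n+1)) := by
    rw [← map_pow, ← map_one (MvPolynomial.C : K →+* MvPolynomial (Fin N) K), ← map_sub,
      ← map_mul]
    congr 1
    rw [← geom_sum_mul qq (n+1), qNat]
    ring
  calc (MvPolynomial.C qq : MvPolynomial (Fin N) K)^(n+1) * PowerSeries.coeff (n+1) F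
        - PowerSeries.coeff (n+1) F
      = ((MvPolynomial.C qq : MvPolynomial (Fin N) K)^(n+1) - 1)
          * PowerSeries.coeff (n+1) F := by ring
    _ = _ := by rw [key]; ring

lemma coeff_iter_Dq (Dq : PowerSeries (MvPolynomial (Fin N) K) → PowerSeries (MvPolynomial (Fin N) K))
    (hDq : IsqDeriv N Dq) :
    ∀ r m : ℕ, PowerSeries.coeff m (Dq^[r] (Eser N))
      = MvPolynomial.C (qPoch m r) * esymm (Fin N) K (m + r) := by
  intro r
  induction r with
  | zero =>
      intro m
      rw [Function.iterate_zero_apply]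
      rw [show qPoch m 0 = 1 from Finset.prod_range_zero _]
      rw [map_one, one_mul, Eser, PowerSeries.coeff_mk]
      rfl
  | succ r ih =>
      intro m
      rw [Function.iterate_succ_apply', coeff_Dq Dq hDq, ih (m+1), ← mul_assoc, ← map_mul]
      have h1 : qNat qq (m + 1) * qPoch (m+1) r = qPoch m (r+1) := by
        rw [qPoch, qPoch, Finset.prod_range_succ', mul_comm]
        congr 1
        · apply Finset.prod_congr rfl
          intro i _
          congr 1
          omega
      rw [h1]
      congr 2
      omega

lemma EqP (Dq : PowerSeries (MvPolynomial (Fin N) K) → PowerSeries (MvPolynomial (Fin N) K))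
    (hDq : IsqDeriv N Dq) (P : ℕ → ℕ → MvPolynomial (Fin N) K) (hP : IsqAnalog N Dq P)
    (r m : ℕ) :
    MvPolynomial.C (qFact qq r) * ∑ p ∈ Finset.HasAntidiagonal.antidiagonal m,
        esymm (Fin N) K p.1 * ((-1 : MvPolynomial (Fin N) K)^p.2 * P (p.2 + r) r)
      = MvPolynomial.C (qPoch m r) * esymm (Fin N) K (m + r) := by
  have h := congrArg (PowerSeries.coeff m) (hP r)
  rw [coeff_iter_Dq Dq hDq] at h
  rw [mul_assoc, PowerSeries.coeff_C_mul, PowerSeries.coeff_mul] at h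
  have hc : ∀ p ∈ Finset.HasAntidiagonal.antidiagonal m,
      (PowerSeries.coeff p.1 (Eser N)) *
        (PowerSeries.coeff p.2 (PowerSeries.mk
          fun m' => (-1 : MvPolynomial (Fin N) K)^m' * P (m' + r) r))
      = esymm (Fin N) K p.1 * ((-1 : MvPolynomial (Fin N) K)^p.2 * P (p.2 + r) r) := by
    intro p _
    rw [Eser, PowerSeries.coeff_mk, PowerSeries.coeff_mk]
  rw [Finset.sum_congr rfl hc] at h
  exact h

lemma EqQ (r : ℕ) (hr : 1 ≤ r) (m : ℕ) :
    MvPolynomial.C (qFact qq r) * ∑ p ∈ Finset.HasAntidiagonal.antidiagonal m,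
        esymm (Fin N) K p.1 * ((-1 : MvPolynomial (Fin N) K)^p.2 * Qpoly N r (p.2 + r))
      = MvPolynomial.C (qPoch m r) * esymm (Fin N) K (m + r) := by
  rw [star N r hr m, ← mul_assoc, ← map_mul, qFact_mul_qBinom]

end PSGlue

/-- for `n ≥ r ≥ 1`,
`[p_n^{(r)}]_q = ∑_{j=r}^n p_n^{(j)} ( ∑_{l=r}^j (−1)^{l−r} C(j,l) [l choose r]_q )`. -/
theorem qAnalog_eq_sum_signed_qbinom (N n r : ℕ) (hN : n ≤ N) (hr : 1 ≤ r) (hrn : r ≤ n)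
    (Dq : PowerSeries (MvPolynomial (Fin N) K) → PowerSeries (MvPolynomial (Fin N) K))
    (hDq : IsqDeriv N Dq)
    (P : ℕ → ℕ → MvPolynomial (Fin N) K) (hP : IsqAnalog N Dq P) :
    P n r =
      ∑ j ∈ Finset.Icc r n,
        pnr N n j *
          MvPolynomial.C (∑ l ∈ Finset.Icc r j,
            (-1 : K) ^ (l - r) * (j.choose l : K) * qBinom qq l r) := by
  have key : ∀ b : ℕ, P (b + r) r = Qpoly N r (b + r) := by
    intro b
    induction b using Nat.strong_induction_on with
    | _ b ih =>
      have h1 := EqP Dq hDq P hP r b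
      have h2 := EqQ (N := N) r hr b
      have hCne : (MvPolynomial.C (qFact qq r) : MvPolynomial (Fin N) K) ≠ 0 := by
        rw [Ne, MvPolynomial.C_eq_zero]
        exact qFact_ne_zero r
      have h3 : ∑ p ∈ Finset.HasAntidiagonal.antidiagonal b,
            esymm (Fin N) K p.1 * ((-1 : MvPolynomial (Fin N) K)^p.2 * P (p.2 + r) r)
          = ∑ p ∈ Finset.HasAntidiagonal.antidiagonal b,
            esymm (Fin N) K p.1 * ((-1 : MvPolynomial (Fin N) K)^p.2 * Qpoly N r (p.2 + r)) :=
        mul_left_cancel₀ hCne (h1.trans h2.symm)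
      have hmem : (0, b) ∈ Finset.HasAntidiagonal.antidiagonal b := by
        simp
      have h4 : ∀ p ∈ (Finset.HasAntidiagonal.antidiagonal b).erase (0, b),
          esymm (Fin N) K p.1 * ((-1 : MvPolynomial (Fin N) K)^p.2 * P (p.2 + r) r)
            = esymm (Fin N) K p.1 * ((-1 : MvPolynomial (Fin N) K)^p.2 * Qpoly N r (p.2 + r)) := by
        intro p hp
        obtain ⟨hne, hp⟩ := Finset.mem_erase.1 hp
        rw [Finset.HasAntidiagonal.mem_antidiagonal] at hp
        have hlt : p.2 < b := by
          by_contra hge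
          push_neg at hge
          apply hne
          have h2' : p.2 = b := by omega
          have h1' : p.1 = 0 := by omega
          cases p
          simp_all
        rw [ih p.2 hlt]
      have h5 := h3
      rw [← Finset.add_sum_erase _ _ hmem, ← Finset.add_sum_erase _ _ hmem,
        Finset.sum_congr rfl h4] at h5
      have h6 : esymm (Fin N) K 0 * ((-1 : MvPolynomial (Fin N) K)^b * P (0 + b + r) r)
          = esymm (Fin N) K 0 * ((-1 : MvPolynomial (Fin N) K)^b * Qpoly N r (b + r)) := by
        have := add_right_cancel h5
        simpa using this
      rw [esymm_zero, one_mul, one_mul] at h6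
      have hne1 : ((-1 : MvPolynomial (Fin N) K))^b ≠ 0 :=
        pow_ne_zero _ (neg_ne_zero.2 one_ne_zero)
      have := mul_left_cancel₀ hne1 (by simpa using h6)
      simpa using this
  have hkey := key (n - r)
  rw [Nat.sub_add_cancel hrn] at hkey
  rw [hkey]
  rfl
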